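/- Let T = O_q(M(k,p))[y^{±1}; σ] with k ≥ 2, q not a root of unity, σ(x_{ij}) = q x_{ij}. Define T_1 = {a ∈ T : y a y^{-1} = q a} and T^{(i)} = {a ∈ T : z a z^{-1} = q^{-i} a} where z = [1,...,k | p+1−k,...,p] is the quantum minor using all rows and the last k columns (assume k ≤ p so z is defined). Then (T^{(0)} ∪ T^{(1)}) ∩ T_1 ⊆ O_q(M(k,p)). -/

import Mathlib

section Aux
variable {K : Type*} [Field K] {T : Type*} [Ring T] [Algebra K T]

/-- commuting `u` leftwards through a power. -/
lemma aux_pow_comm_l {u t : T} {c : K} (h : u * t = c • (t * u)) :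
    ∀ n : ℕ, u * t ^ n = c ^ n • (t ^ n * u) := by
  intro n
  induction n with
  | zero => simp
  | succ n ih =>
    rw [pow_succ, pow_succ, ← mul_assoc, ih, smul_mul_assoc, mul_assoc, h,
      mul_smul_comm, smul_smul, mul_assoc]

/-- commuting `u` rightwards through a power. -/
lemma aux_pow_comm_r {u t : T} {c : K} (h : t * u = c • (u * t)) :
    ∀ n : ℕ, t ^ n * u = c ^ n • (u * t ^ n) := by
  intro n
  induction n with
  | zero => simp
  | succ n ih =>
    rw [pow_succ, mul_assoc, h, mul_smul_comm, ← mul_assoc, ih, smul_mul_assoc,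
      smul_smul, mul_assoc, mul_comm c (c ^ n), ← pow_succ]

lemma aux_list_comm_l {α : Type*} {u : T} (f : α → T) (c : α → K)
    (h : ∀ a, u * f a = c a • (f a * u)) (L : List α) :
    u * (L.map f).prod = (L.map c).prod • ((L.map f).prod * u) := by
  induction L with
  | nil => simp
  | cons a L ih =>
    simp only [List.map_cons, List.prod_cons]
    rw [← mul_assoc, h a, smul_mul_assoc, mul_assoc, ih, mul_smul_comm, smul_smul,
      mul_assoc]

lemma aux_list_comm_r {α : Type*} {u : T} (f : α → T) (c : α → K)
    (h : ∀ a, f a * u = c a • (u * f a)) (L : List α) :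
    (L.map f).prod * u = (L.map c).prod • (u * (L.map f).prod) := by
  induction L with
  | nil => simp
  | cons a L ih =>
    simp only [List.map_cons, List.prod_cons]
    rw [mul_assoc, ih, mul_smul_comm, ← mul_assoc, h a, smul_mul_assoc, smul_smul,
      mul_assoc, mul_comm (c a)]

end Aux

section Aux2
variable {K : Type*} [Field K] {T : Type*} [Ring T] [Algebra K T]

lemma aux_repr_sum {ι : Type*} (B : Module.Basis ι K T) (s : Finset ι) (e : ι → K)
    (v : ι) (hv : v ∈ s) : B.repr (∑ w ∈ s, e w • B w) v = e v := by
  classical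
  rw [map_sum]
  rw [Finset.sum_apply']
  simp only [map_smul, Module.Basis.repr_self, Finsupp.smul_single, smul_eq_mul, mul_one,
    Finsupp.single_apply]
  rw [Finset.sum_ite_eq' s v e] at *
  simp [hv]

lemma aux_zpow_inj (q : K) (hq0 : q ≠ 0) (hq : ∀ m : ℕ, 0 < m → q ^ m ≠ 1)
    {m n : ℤ} (h : q ^ m = q ^ n) : m = n := by
  by_contra hne
  have he : q ^ (m - n) = 1 := by
    rw [zpow_sub₀ hq0, h, div_self (zpow_ne_zero _ hq0)]
  set e := m - n with hedef
  have hene : e ≠ 0 := sub_ne_zero.mpr hne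
  rcases lt_or_gt_of_ne hene with hlt | hgt
  · refine hq (-e).toNat (by omega) ?_
    have : q ^ (((-e).toNat : ℤ)) = 1 := by
      rw [Int.toNat_of_nonneg (by omega), zpow_neg, he, inv_one]
    rwa [zpow_natCast] at this
  · refine hq e.toNat (by omega) ?_
    have : q ^ ((e.toNat : ℤ)) = 1 := by
      rw [Int.toNat_of_nonneg (by omega)]; exact he
    rwa [zpow_natCast] at this

lemma aux_units_zpow_comm {y z : Tˣ} {c : K} (hc : c ≠ 0)
    (h : (y : T) * z = c • ((z : T) * y)) (s : ℤ) :
    ((y ^ s : Tˣ) : T) * z = (c ^ s) • ((z : T) * ((y ^ s : Tˣ) : T)) := by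
  have h' : ((y⁻¹ : Tˣ) : T) * z = c⁻¹ • ((z : T) * ((y⁻¹ : Tˣ) : T)) := by
    have h2 : (z : T) * ((y⁻¹ : Tˣ) : T) = c • (((y⁻¹ : Tˣ) : T) * z) := by
      calc (z : T) * ((y⁻¹ : Tˣ) : T)
          = ((y⁻¹ : Tˣ) : T) * ((y : T) * z) * ((y⁻¹ : Tˣ) : T) := by
            rw [← mul_assoc, Units.inv_mul, one_mul]
        _ = c • (((y⁻¹ : Tˣ) : T) * z) := by
            rw [h, mul_smul_comm, smul_mul_assoc, mul_assoc, mul_assoc,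
              Units.mul_inv, mul_one]
    rw [h2, smul_smul, inv_mul_cancel₀ hc, one_smul]
  induction s using Int.induction_on with
  | zero => simp
  | succ n ih =>
    rw [zpow_add_one, Units.val_mul, mul_assoc, h, mul_smul_comm, ← mul_assoc, ih,
      smul_mul_assoc, smul_smul, mul_assoc, zpow_add_one₀ hc, mul_comm c]
  | pred n ih =>
    rw [show (-(n : ℤ) - 1) = (-(n:ℤ)) - 1 from rfl, zpow_sub_one, Units.val_mul,
      mul_assoc, h', mul_smul_comm, ← mul_assoc, ih, smul_mul_assoc, smul_smul,
      mul_assoc, zpow_sub_one₀ hc, mul_comm c⁻¹]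

end Aux2


/-- let `T = O_q(M(k,p))[y^{±1}; σ]` with `k ≥ 2`, `k ≤ p`, `q` not a
root of unity, and let `z = [1,…,k ∣ p+1−k,…,p]` be the quantum minor on all rows
and the last `k` columns.  With `T₁ = {a : y a y⁻¹ = q a}` and
`T^{(i)} = {a : z a z⁻¹ = q^{−i} a}`, one has `(T^{(0)} ∪ T^{(1)}) ∩ T₁ ⊆ O_q(M(k,p))`.
Here `T` is presented abstractly by its monomial basis `x^{a} y^{s}` together with
the commutation rules of `y` and `z` with the generators. -/
theorem deg_one_eigenvectors_lie_in_quantum_matrices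
    {K : Type*} [Field K] {T : Type*} [Ring T] [Algebra K T]
    (q : K) (hq0 : q ≠ 0) (hq : ∀ m : ℕ, 0 < m → q ^ m ≠ 1)
    (k p : ℕ) (hk : 2 ≤ k) (hkp : k ≤ p)
    (x : Fin k → Fin p → T) (y z : Tˣ)
    (B : Module.Basis ((Fin k → Fin p → ℕ) × ℤ) K T)
    (hB : ∀ v : (Fin k → Fin p → ℕ) × ℤ,
      B v = (List.ofFn fun i : Fin k =>
          (List.ofFn fun j : Fin p => x i j ^ v.1 i j).prod).prod * ((y ^ v.2 : Tˣ) : T))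
    (hyx : ∀ i j, (y : T) * x i j = q • (x i j * (y : T)))
    (hzx₁ : ∀ (i : Fin k) (j : Fin p), p - k ≤ (j : ℕ) → x i j * (z : T) = (z : T) * x i j)
    (hzx₂ : ∀ (i : Fin k) (j : Fin p), (j : ℕ) < p - k →
      x i j * (z : T) = q • ((z : T) * x i j))
    (hyz : (y : T) * (z : T) = q ^ k • ((z : T) * (y : T))) :
    ∀ a : T,
      ((z : T) * a * (↑z⁻¹ : T) = a ∨ (z : T) * a * (↑z⁻¹ : T) = q⁻¹ • a) →
      (y : T) * a * (↑y⁻¹ : T) = q • a →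
      a ∈ Algebra.adjoin K (Set.range fun ij : Fin k × Fin p => x ij.1 ij.2) := by
  classical
  set deg : (Fin k → Fin p → ℕ) × ℤ → ℕ := fun v => ∑ i, ∑ j, v.1 i j with hdeg
  set low : (Fin k → Fin p → ℕ) × ℤ → ℕ :=
    fun v => ∑ i : Fin k, ∑ j : Fin p, if (j : ℕ) < p - k then v.1 i j else 0 with hlow
  -- inner products, y side
  have hP : ∀ (ai : Fin p → ℕ) (i : Fin k),
      (y : T) * (List.ofFn fun j : Fin p => x i j ^ ai j).prod
        = q ^ (∑ j, ai j) • ((List.ofFn fun j : Fin p => x i j ^ ai j).prod * (y : T)) := by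
    intro ai i
    have := aux_list_comm_l (u := (y : T)) (fun j : Fin p => x i j ^ ai j)
      (fun j => q ^ ai j) (fun j => aux_pow_comm_l (hyx i j) (ai j)) (List.finRange p)
    rw [← List.ofFn_eq_map, ← List.ofFn_eq_map] at this
    rw [this, List.prod_ofFn, Finset.prod_pow_eq_pow_sum]
  -- y conjugation on basis monomials
  have hyB : ∀ v, (y : T) * B v * (↑y⁻¹ : T) = q ^ (deg v) • B v := by
    intro v
    rw [hB v]
    have houter := aux_list_comm_l (u := (y : T))
      (fun i : Fin k => (List.ofFn fun j : Fin p => x i j ^ v.1 i j).prod)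
      (fun i : Fin k => q ^ (∑ j, v.1 i j))
      (fun i => hP (v.1 i) i) (List.finRange k)
    rw [← List.ofFn_eq_map, ← List.ofFn_eq_map] at houter
    rw [List.prod_ofFn, Finset.prod_pow_eq_pow_sum] at houter
    have h1 : y * (y ^ v.2) * y⁻¹ = y ^ v.2 := by
      rw [((Commute.refl y).zpow_right v.2).eq, mul_assoc]; group
    have hcomm := congrArg (Units.val) h1
    simp only [Units.val_mul] at hcomm
    rw [← mul_assoc, houter, smul_mul_assoc, smul_mul_assoc, mul_assoc, mul_assoc,
      ← mul_assoc ((y : T)), hcomm]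
  -- z commutation with generators, uniform form
  have hzx : ∀ (i : Fin k) (j : Fin p),
      x i j * (z : T) = (if (j : ℕ) < p - k then q else 1) • ((z : T) * x i j) := by
    intro i j
    by_cases hj : (j : ℕ) < p - k
    · rw [if_pos hj]; exact hzx₂ i j hj
    · rw [if_neg hj, one_smul]; exact hzx₁ i j (le_of_not_gt hj)
  have hPz : ∀ (ai : Fin p → ℕ) (i : Fin k),
      (List.ofFn fun j : Fin p => x i j ^ ai j).prod * (z : T)
        = q ^ (∑ j : Fin p, if (j : ℕ) < p - k then ai j else 0) •
          ((z : T) * (List.ofFn fun j : Fin p => x i j ^ ai j).prod) := by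
    intro ai i
    have := aux_list_comm_r (u := (z : T)) (fun j : Fin p => x i j ^ ai j)
      (fun j => (if (j : ℕ) < p - k then q else 1) ^ ai j)
      (fun j => aux_pow_comm_r (hzx i j) (ai j)) (List.finRange p)
    rw [← List.ofFn_eq_map, ← List.ofFn_eq_map] at this
    rw [this, List.prod_ofFn]
    congr 1
    rw [← Finset.prod_pow_eq_pow_sum]
    apply Finset.prod_congr rfl
    intro j _
    by_cases hj : (j : ℕ) < p - k
    · rw [if_pos hj, if_pos hj]
    · rw [if_neg hj, if_neg hj, one_pow, pow_zero]
  -- z conjugation on basis monomials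
  have hzB : ∀ v, (z : T) * B v * (↑z⁻¹ : T) = q ^ (-((low v : ℤ) + k * v.2)) • B v := by
    intro v
    have houter := aux_list_comm_r (u := (z : T))
      (fun i : Fin k => (List.ofFn fun j : Fin p => x i j ^ v.1 i j).prod)
      (fun i : Fin k => q ^ (∑ j : Fin p, if (j : ℕ) < p - k then v.1 i j else 0))
      (fun i => hPz (v.1 i) i) (List.finRange k)
    rw [← List.ofFn_eq_map, ← List.ofFn_eq_map] at houter
    rw [List.prod_ofFn, Finset.prod_pow_eq_pow_sum] at houter
    have hys := aux_units_zpow_comm (c := q ^ k) (pow_ne_zero k hq0) hyz v.2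
    have hC : (q ^ k) ^ v.2 * q ^ (∑ i : Fin k, ∑ j : Fin p,
          if (j : ℕ) < p - k then v.1 i j else 0)
        = q ^ ((low v : ℤ) + k * v.2) := by
      have e1 : ((q ^ k : K)) ^ v.2 = q ^ ((k : ℤ) * v.2) := by
        rw [← zpow_natCast q k, ← zpow_mul]
      have e2 : low v = ∑ i : Fin k, ∑ j : Fin p,
          if (j : ℕ) < p - k then v.1 i j else 0 := by rw [hlow]
      calc ((q ^ k : K)) ^ v.2 * q ^ (∑ i : Fin k, ∑ j : Fin p,
              if (j : ℕ) < p - k then v.1 i j else 0)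
          = q ^ ((k : ℤ) * v.2) * q ^ ((low v : ℕ) : ℤ) := by
            rw [e1, ← e2, zpow_natCast]
        _ = q ^ ((low v : ℤ) + k * v.2) := by rw [← zpow_add₀ hq0, add_comm]
    have hBz : B v * (z : T) = q ^ ((low v : ℤ) + k * v.2) • ((z : T) * B v) := by
      rw [hB v, mul_assoc, hys, mul_smul_comm, ← mul_assoc, houter, smul_mul_assoc,
        smul_smul, hC, mul_assoc]
    have hCne : q ^ ((low v : ℤ) + k * v.2) ≠ 0 := zpow_ne_zero _ hq0
    have hzBv : (z : T) * B v = q ^ (-((low v : ℤ) + k * v.2)) • (B v * (z : T)) := by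
      rw [hBz, smul_smul, zpow_neg, inv_mul_cancel₀ hCne, one_smul]
    rw [hzBv, smul_mul_assoc, mul_assoc, Units.mul_inv, mul_one]
  intro a hz hy
  set c := B.repr a with hc
  have ha : ∑ v ∈ c.support, c v • B v = a := by
    have := B.linearCombination_repr a
    rwa [Finsupp.linearCombination_apply, Finsupp.sum] at this
  -- coefficient identities
  have e1 : (y : T) * a * (↑y⁻¹ : T) = ∑ w ∈ c.support, (c w * q ^ deg w) • B w := by
    conv_lhs => rw [← ha]
    rw [Finset.mul_sum, Finset.sum_mul]
    apply Finset.sum_congr rfl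
    intro w _
    rw [mul_smul_comm, smul_mul_assoc, hyB w, smul_smul]
  have e2 : q • a = ∑ w ∈ c.support, (q * c w) • B w := by
    rw [← ha, Finset.smul_sum]
    apply Finset.sum_congr rfl
    intro w _
    rw [smul_smul]
  have e3 : (z : T) * a * (↑z⁻¹ : T)
      = ∑ w ∈ c.support, (c w * q ^ (-((low w : ℤ) + k * w.2))) • B w := by
    conv_lhs => rw [← ha]
    rw [Finset.mul_sum, Finset.sum_mul]
    apply Finset.sum_congr rfl
    intro w _
    rw [mul_smul_comm, smul_mul_assoc, hzB w, smul_smul]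
  have hmem : ∀ v ∈ c.support, v.2 = 0 := by
    intro v hv
    have hcv : c v ≠ 0 := Finsupp.mem_support_iff.mp hv
    -- from the y-eigenvalue condition : deg v = 1
    have hy' : c v * q ^ deg v = q * c v := by
      have h := hy
      rw [e1, e2] at h
      have hEq : B.repr (∑ w ∈ c.support, (c w * q ^ deg w) • B w) v
          = B.repr (∑ w ∈ c.support, (q * c w) • B w) v := by rw [h]
      rwa [aux_repr_sum B c.support _ v hv, aux_repr_sum B c.support _ v hv] at hEq
    have hqq : q ^ deg v = q ^ 1 := by
      rw [pow_one]
      rw [mul_comm q (c v)] at hy'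
      exact mul_left_cancel₀ hcv hy'
    have hdv : deg v = 1 := by
      have : ((deg v : ℤ)) = ((1 : ℕ) : ℤ) := by
        apply aux_zpow_inj q hq0 hq
        rw [zpow_natCast, zpow_natCast]
        exact_mod_cast hqq
      exact_mod_cast this
    -- low v ≤ deg v
    have hlowle : low v ≤ deg v := by
      rw [hlow, hdeg]
      apply Finset.sum_le_sum
      intro i _
      apply Finset.sum_le_sum
      intro j _
      split_ifs <;> simp
    -- from the z-eigenvalue condition
    have hzexp : (low v : ℤ) + k * v.2 = 0 ∨ (low v : ℤ) + k * v.2 = 1 := by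
      rcases hz with h | h
      · left
        rw [e3] at h
        have hEq : B.repr (∑ w ∈ c.support,
              (c w * q ^ (-((low w : ℤ) + k * w.2))) • B w) v
            = B.repr (∑ w ∈ c.support, c w • B w) v := by rw [h, ← ha]
        rw [aux_repr_sum B c.support _ v hv, aux_repr_sum B c.support _ v hv] at hEq
        have h2 : q ^ (-((low v : ℤ) + k * v.2)) = q ^ (0 : ℤ) := by
          rw [zpow_zero]
          exact mul_left_cancel₀ hcv (by rw [hEq, mul_one])
        have := aux_zpow_inj q hq0 hq h2
        omega
      · right
        rw [e3] at h
        have e4 : q⁻¹ • a = ∑ w ∈ c.support, (q⁻¹ * c w) • B w := by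
          rw [← ha, Finset.smul_sum]
          exact Finset.sum_congr rfl fun w _ => smul_smul q⁻¹ (c w) (B w)
        rw [e4] at h
        have hEq : B.repr (∑ w ∈ c.support,
              (c w * q ^ (-((low w : ℤ) + k * w.2))) • B w) v
            = B.repr (∑ w ∈ c.support, (q⁻¹ * c w) • B w) v := by rw [h]
        rw [aux_repr_sum B c.support _ v hv, aux_repr_sum B c.support _ v hv] at hEq
        have h2 : q ^ (-((low v : ℤ) + k * v.2)) = q ^ (-1 : ℤ) := by
          rw [zpow_neg_one]
          rw [mul_comm (q⁻¹) (c v)] at hEq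
          exact mul_left_cancel₀ hcv hEq
        have := aux_zpow_inj q hq0 hq h2
        omega
    -- conclude v.2 = 0
    have hlow1 : (low v : ℤ) ≤ 1 := by exact_mod_cast hlowle.trans_eq hdv
    have hlow0 : (0 : ℤ) ≤ (low v : ℤ) := Int.natCast_nonneg _
    rcases lt_trichotomy v.2 0 with hs | hs | hs
    · exfalso
      have h1 : v.2 ≤ -1 := by omega
      have h2 : (k : ℤ) * v.2 ≤ (k : ℤ) * (-1) :=
        mul_le_mul_of_nonneg_left h1 (by positivity)
      have h3 : (2 : ℤ) ≤ (k : ℤ) := by exact_mod_cast hk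
      omega
    · exact hs
    · exfalso
      have h1 : (1 : ℤ) ≤ v.2 := hs
      have h2 : (k : ℤ) * 1 ≤ (k : ℤ) * v.2 :=
        mul_le_mul_of_nonneg_left h1 (by positivity)
      have h3 : (2 : ℤ) ≤ (k : ℤ) := by exact_mod_cast hk
      omega
  -- conclude membership
  rw [← ha]
  apply Subalgebra.sum_mem
  intro w hw
  apply Subalgebra.smul_mem
  rw [hB w, hmem w hw, zpow_zero, Units.val_one, mul_one]
  apply Subalgebra.list_prod_mem
  intro t ht
  obtain ⟨i, rfl⟩ := List.mem_ofFn.mp ht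
  apply Subalgebra.list_prod_mem
  intro s hs
  obtain ⟨j, rfl⟩ := List.mem_ofFn.mp hs
  exact pow_mem (Algebra.subset_adjoin (Set.mem_range.mpr ⟨(i, j), rfl⟩)) _
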